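/- Let a_N, a_D, b_N, b_D be integers with a_D ≥ 1, b_D ≥ 1, gcd(a_N, a_D) = 1 and gcd(b_N, b_D) = 1, and let H be the smallest positive integer such that both z = 2·(a_N/a_D)·H and w = (a_N/a_D)·H² + (b_N/b_D)·H are integers. Then: (i) if a_D ≡ 0 (mod 4), then H = lcm(a_D/2, b_D); (ii) if a_D ≡ 2 (mod 4) and b_D ≡ 2 (mod 4), then H = lcm(a_D/2, b_D/2); (iii) in all other cases, H = lcm(a_D, b_D). In particular, H is either lcm(a_D, b_D) or lcm(a_D, b_D)/2. -/

import Mathlib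

/-- `GoodPeriod aN aD bN bD H` says that both `z = 2·(aN/aD)·H` and
`w = (aN/aD)·H² + (bN/bD)·H` are integers. -/
def GoodPeriod (aN bN : ℤ) (aD bD : ℕ) (H : ℕ) : Prop :=
  (∃ z : ℤ, (z : ℚ) = 2 * ((aN : ℚ) / (aD : ℚ)) * (H : ℚ)) ∧
  (∃ w : ℤ, (w : ℚ) = ((aN : ℚ) / (aD : ℚ)) * (H : ℚ) ^ 2 + ((bN : ℚ) / (bD : ℚ)) * (H : ℚ))

lemma good_iff_dvd (aN bN : ℤ) (aD bD : ℕ) (haD : 1 ≤ aD) (hbD : 1 ≤ bD) (H : ℕ) :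
    GoodPeriod aN bN aD bD H ↔
      ((aD:ℤ) ∣ 2 * aN * H ∧ ((aD:ℤ) * bD) ∣ aN * bD * (H:ℤ)^2 + bN * aD * H) := by
  have h1 : ((aD:ℚ)) ≠ 0 := by positivity
  have h2 : ((bD:ℚ)) ≠ 0 := by positivity
  constructor
  · rintro ⟨⟨z, hz⟩, ⟨w, hw⟩⟩
    constructor
    · field_simp at hz
      exact Dvd.intro_left z (by exact_mod_cast hz)
    · field_simp at hw
      have : (w : ℚ) * (aD * bD) = aN * (H:ℚ)^2 * bD + bN * aD * H := by
        linear_combination hw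
      have h3 : w * ((aD:ℤ) * bD) = aN * (H:ℤ)^2 * bD + bN * aD * H := by exact_mod_cast this
      exact ⟨w, by linear_combination -h3⟩
  · rintro ⟨⟨z, hz⟩, ⟨w, hw⟩⟩
    constructor
    · refine ⟨z, ?_⟩
      have hq : (2 * aN * (H:ℤ) : ℚ) = ((aD:ℤ) * z : ℚ) := by
        exact_mod_cast congrArg (fun t : ℤ => (t:ℚ)) hz
      push_cast at hq
      field_simp
      linear_combination -hq
    · refine ⟨w, ?_⟩
      have hq : ((aN * bD * (H:ℤ)^2 + bN * aD * H : ℤ) : ℚ) = (((aD:ℤ) * bD * w : ℤ) : ℚ) := by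
        exact_mod_cast congrArg (fun t : ℤ => (t:ℚ)) hw
      push_cast at hq
      field_simp
      linear_combination -hq

lemma zcond_iff {aN A H : ℤ} (hca : IsCoprime A aN) : (A ∣ 2*aN*H) ↔ A ∣ 2*H := by
  constructor
  · intro h
    exact hca.dvd_of_dvd_mul_left (by rwa [show aN*(2*H) = 2*aN*H by ring])
  · intro h
    have := h.mul_left aN
    rwa [show aN*(2*H) = 2*aN*H by ring] at this

lemma tailB {aN bN A B H : ℤ} (hA : A ≠ 0) (hbN : IsCoprime B bN)
    (hAH : A ∣ H) (h2 : A*B ∣ aN*B*H^2 + bN*A*H) : B ∣ H := by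
  obtain ⟨t, ht⟩ := hAH
  have d1 : A*B ∣ aN*B*H^2 := ⟨aN*t*H, by linear_combination aN*B*H*ht⟩
  have d2 : A*B ∣ A*(bN*H) := by
    have h3 := dvd_sub h2 d1
    rwa [show aN*B*H^2 + bN*A*H - aN*B*H^2 = A*(bN*H) by ring] at h3
  have d4 : B ∣ bN*H := (mul_dvd_mul_iff_left hA).mp d2
  exact hbN.dvd_of_dvd_mul_left d4

lemma goodZ_of_dvd {aN bN A B H : ℤ} (hAH : A ∣ H) (hBH : B ∣ H) :
    A ∣ 2*H ∧ A*B ∣ aN*B*H^2 + bN*A*H := by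
  obtain ⟨t, ht⟩ := hAH; obtain ⟨s, hs⟩ := hBH
  exact ⟨⟨2*t, by linear_combination 2*ht⟩,
    ⟨aN*t*H + bN*s, by linear_combination aN*B*H*ht + bN*A*hs⟩⟩

lemma case1Z {aN bN M B H : ℤ} (hM : M ≠ 0) (h2M : (2:ℤ) ∣ M)
    (hbN : IsCoprime B bN) :
    ((2*M) ∣ 2*H ∧ (2*M)*B ∣ aN*B*H^2 + bN*(2*M)*H) ↔ (M ∣ H ∧ B ∣ H) := by
  obtain ⟨u, hu⟩ := h2M
  constructor
  · rintro ⟨h1, h2⟩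
    have hMH : M ∣ H := (mul_dvd_mul_iff_left (two_ne_zero (α := ℤ))).mp h1
    refine ⟨hMH, ?_⟩
    obtain ⟨t, ht⟩ := hMH
    have d1 : (2*M)*B ∣ aN*B*H^2 :=
      ⟨aN*u*t^2, by linear_combination aN*B*(H+M*t)*ht + aN*B*M*t^2*hu⟩
    have d2 : (2*M)*B ∣ (2*M)*(bN*H) := by
      have h3 := dvd_sub h2 d1
      rwa [show aN*B*H^2 + bN*(2*M)*H - aN*B*H^2 = (2*M)*(bN*H) by ring] at h3
    have d4 : B ∣ bN*H := (mul_dvd_mul_iff_left (by simp [hM] : (2*M:ℤ) ≠ 0)).mp d2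
    exact hbN.dvd_of_dvd_mul_left d4
  · rintro ⟨hMH, hBH⟩
    obtain ⟨t, ht⟩ := hMH; obtain ⟨s, hs⟩ := hBH
    refine ⟨mul_dvd_mul_left 2 ⟨t, ht⟩, ?_⟩
    exact ⟨aN*u*t^2 + bN*s, by linear_combination aN*B*(H+M*t)*ht + aN*B*M*t^2*hu + 2*bN*M*hs⟩

lemma odd_of_not_two_dvd' {t : ℤ} (h : ¬ (2:ℤ) ∣ t) : Odd t :=
  Int.not_even_iff_odd.mp (fun he => h (even_iff_two_dvd.mp he))

lemma case2Z {aN bN M N H : ℤ} (hM : M ≠ 0)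
    (hMo : ¬(2:ℤ)∣M) (hNo : ¬(2:ℤ)∣N) (haNo : ¬(2:ℤ)∣aN) (hbNo : ¬(2:ℤ)∣bN)
    (hbN : IsCoprime N bN) :
    ((2*M) ∣ 2*H ∧ (2*M)*(2*N) ∣ aN*(2*N)*H^2 + bN*(2*M)*H) ↔ (M ∣ H ∧ N ∣ H) := by
  constructor
  · rintro ⟨h1, h2⟩
    have hMH : M ∣ H := (mul_dvd_mul_iff_left (two_ne_zero (α := ℤ))).mp h1
    refine ⟨hMH, ?_⟩
    rw [show (2*M)*(2*N) = 2*(2*(M*N)) by ring,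
        show aN*(2*N)*H^2 + bN*(2*M)*H = 2*(aN*N*H^2 + bN*M*H) by ring] at h2
    have hT2 : 2*(M*N) ∣ aN*N*H^2 + bN*M*H :=
      (mul_dvd_mul_iff_left (two_ne_zero (α := ℤ))).mp h2
    have hMNT : M*N ∣ aN*N*H^2 + bN*M*H := (dvd_mul_left (M*N) 2).trans hT2
    obtain ⟨t, ht⟩ := hMH
    have d1 : M*N ∣ aN*N*H^2 := ⟨aN*t*H, by linear_combination aN*N*H*ht⟩
    have d2 : M*N ∣ M*(bN*H) := by
      have h3 := dvd_sub hMNT d1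
      rwa [show aN*N*H^2 + bN*M*H - aN*N*H^2 = M*(bN*H) by ring] at h3
    exact hbN.dvd_of_dvd_mul_left ((mul_dvd_mul_iff_left hM).mp d2)
  · rintro ⟨hMH, hNH⟩
    obtain ⟨t, ht⟩ := hMH; obtain ⟨s, hs⟩ := hNH
    refine ⟨mul_dvd_mul_left 2 ⟨t, ht⟩, ?_⟩
    have hMNT : M*N ∣ aN*N*H^2 + bN*M*H :=
      ⟨aN*t*H + bN*s, by linear_combination aN*N*H*ht + bN*M*hs⟩
    have h2T : (2:ℤ) ∣ aN*N*H^2 + bN*M*H := by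
      rcases Int.even_or_odd H with hE | hO
      · have h2H : (2:ℤ) ∣ H := even_iff_two_dvd.mp hE
        have := h2H.mul_right (aN*N*H + bN*M)
        rwa [show H*(aN*N*H + bN*M) = aN*N*H^2 + bN*M*H by ring] at this
      · have hsum : Even (aN*N*H + bN*M) :=
          Odd.add_odd (((odd_of_not_two_dvd' haNo).mul (odd_of_not_two_dvd' hNo)).mul hO)
            ((odd_of_not_two_dvd' hbNo).mul (odd_of_not_two_dvd' hMo))
        have h2H : (2:ℤ) ∣ aN*N*H + bN*M := even_iff_two_dvd.mp hsum
        have := h2H.mul_right H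
        rwa [show (aN*N*H + bN*M)*H = aN*N*H^2 + bN*M*H by ring] at this
    obtain ⟨k, hk⟩ := hMNT
    have hMN_odd : ¬ (2:ℤ) ∣ M*N := fun h => ((Int.prime_two.dvd_mul).mp h).elim hMo hNo
    have h2k : (2:ℤ) ∣ k := ((Int.prime_two.dvd_mul).mp (hk ▸ h2T)).resolve_left hMN_odd
    obtain ⟨j, hj⟩ := h2k
    exact ⟨j, by linear_combination 2*hk + 2*M*N*hj⟩

lemma key_odd {A H : ℤ} (hAo : ¬(2:ℤ) ∣ A) (h1 : A ∣ 2*H) : A ∣ H :=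
  (((Int.prime_two.coprime_iff_not_dvd).mpr hAo).symm).dvd_of_dvd_mul_left h1

lemma two_dvd_H_of_b_odd {aN bN M B H : ℤ} (haNo : ¬(2:ℤ)∣aN) (hBo : ¬(2:ℤ)∣B)
    (h2 : (2*M)*B ∣ aN*B*H^2 + bN*(2*M)*H) : (2:ℤ) ∣ H := by
  have h2d : (2:ℤ) ∣ aN*B*H^2 + bN*(2*M)*H :=
    dvd_trans ⟨M*B, by ring⟩ h2
  have d2 : (2:ℤ) ∣ bN*(2*M)*H := ⟨bN*M*H, by ring⟩
  have d1 : (2:ℤ) ∣ aN*B*H^2 := by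
    have h3 := dvd_sub h2d d2
    rwa [show aN*B*H^2 + bN*(2*M)*H - bN*(2*M)*H = aN*B*H^2 by ring] at h3
  rcases (Int.prime_two.dvd_mul).mp d1 with h | h
  · rcases (Int.prime_two.dvd_mul).mp h with h' | h'
    · exact absurd h' haNo
    · exact absurd h' hBo
  · exact Int.prime_two.dvd_of_dvd_pow h

lemma two_dvd_H_of_b_four {aN bN M B H : ℤ} (hMo : ¬(2:ℤ)∣M) (hbNo : ¬(2:ℤ)∣bN)
    (h4B : (4:ℤ) ∣ B) (h2 : (2*M)*B ∣ aN*B*H^2 + bN*(2*M)*H) : (2:ℤ) ∣ H := by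
  obtain ⟨c, hc⟩ := h4B
  have h4 : (4:ℤ) ∣ aN*B*H^2 + bN*(2*M)*H :=
    dvd_trans ⟨2*M*c, by linear_combination 2*M*hc⟩ h2
  have d1 : (4:ℤ) ∣ aN*B*H^2 := ⟨aN*c*H^2, by linear_combination aN*H^2*hc⟩
  have d2 : (4:ℤ) ∣ bN*(2*M)*H := by
    have h3 := dvd_sub h4 d1
    rwa [show aN*B*H^2 + bN*(2*M)*H - aN*B*H^2 = bN*(2*M)*H by ring] at h3
  have d3 : (2:ℤ)*2 ∣ 2*(bN*M*H) := by
    rwa [show bN*(2*M)*H = 2*(bN*M*H) by ring, show (4:ℤ) = 2*2 by norm_num] at d2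
  have d4 : (2:ℤ) ∣ bN*M*H := (mul_dvd_mul_iff_left (two_ne_zero (α := ℤ))).mp d3
  rcases (Int.prime_two.dvd_mul).mp d4 with h | h
  · rcases (Int.prime_two.dvd_mul).mp h with h' | h'
    · exact absurd h' hbNo
    · exact absurd h' hMo
  · exact h

lemma not_two_dvd_num {aN : ℤ} {aD : ℕ} (ha : Int.gcd aN (aD:ℤ) = 1) (h2 : 2 ∣ aD) :
    ¬ (2:ℤ) ∣ aN := by
  intro h
  have hca : IsCoprime aN (aD:ℤ) := Int.isCoprime_iff_gcd_eq_one.mpr ha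
  have h2A : (2:ℤ) ∣ (aD:ℤ) := by exact_mod_cast h2
  have := Int.isUnit_iff.mp (hca.isUnit_of_dvd' h h2A)
  omega

lemma good_iff_case1 (aN bN : ℤ) (aD bD : ℕ) (haD : 1 ≤ aD) (hbD : 1 ≤ bD)
    (ha : Int.gcd aN (aD : ℤ) = 1) (hb : Int.gcd bN (bD : ℤ) = 1)
    (h0 : aD % 4 = 0) (H : ℕ) :
    GoodPeriod aN bN aD bD H ↔ (aD / 2 ∣ H ∧ bD ∣ H) := by
  have hca : IsCoprime ((aD:ℤ)) aN := (Int.isCoprime_iff_gcd_eq_one.mpr ha).symm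
  have hcb : IsCoprime ((bD:ℤ)) bN := (Int.isCoprime_iff_gcd_eq_one.mpr hb).symm
  rw [good_iff_dvd aN bN aD bD haD hbD H, zcond_iff hca,
    show ((aD:ℤ)) = 2*((aD/2 : ℕ) : ℤ) by exact_mod_cast (by omega : aD = 2*(aD/2)),
    case1Z (by exact_mod_cast (by omega : aD/2 ≠ 0))
      (by exact_mod_cast (by omega : 2 ∣ aD/2)) hcb,
    Int.natCast_dvd_natCast, Int.natCast_dvd_natCast]

lemma good_iff_case2 (aN bN : ℤ) (aD bD : ℕ) (haD : 1 ≤ aD) (hbD : 1 ≤ bD)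
    (ha : Int.gcd aN (aD : ℤ) = 1) (hb : Int.gcd bN (bD : ℤ) = 1)
    (h2a : aD % 4 = 2) (h2b : bD % 4 = 2) (H : ℕ) :
    GoodPeriod aN bN aD bD H ↔ (aD / 2 ∣ H ∧ bD / 2 ∣ H) := by
  have hca : IsCoprime ((aD:ℤ)) aN := (Int.isCoprime_iff_gcd_eq_one.mpr ha).symm
  have hcb : IsCoprime ((bD:ℤ)) bN := (Int.isCoprime_iff_gcd_eq_one.mpr hb).symm
  have hcn : IsCoprime (((bD/2 : ℕ)):ℤ) bN :=
    IsCoprime.of_isCoprime_of_dvd_left hcb (by exact_mod_cast (⟨2, by omega⟩ : bD/2 ∣ bD))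
  have hMo : ¬ (2:ℤ) ∣ ((aD/2 : ℕ) : ℤ) := by
    intro h; have : 2 ∣ aD/2 := by exact_mod_cast h
    omega
  have hNo : ¬ (2:ℤ) ∣ ((bD/2 : ℕ) : ℤ) := by
    intro h; have : 2 ∣ bD/2 := by exact_mod_cast h
    omega
  rw [good_iff_dvd aN bN aD bD haD hbD H, zcond_iff hca,
    show ((aD:ℤ)) = 2*((aD/2 : ℕ) : ℤ) by exact_mod_cast (by omega : aD = 2*(aD/2)),
    show ((bD:ℤ)) = 2*((bD/2 : ℕ) : ℤ) by exact_mod_cast (by omega : bD = 2*(bD/2)),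
    case2Z (by exact_mod_cast (by omega : aD/2 ≠ 0)) hMo hNo
      (not_two_dvd_num ha (by omega)) (not_two_dvd_num hb (by omega)) hcn,
    Int.natCast_dvd_natCast, Int.natCast_dvd_natCast]

lemma good_iff_case3 (aN bN : ℤ) (aD bD : ℕ) (haD : 1 ≤ aD) (hbD : 1 ≤ bD)
    (ha : Int.gcd aN (aD : ℤ) = 1) (hb : Int.gcd bN (bD : ℤ) = 1)
    (h0 : ¬ (aD % 4 = 0)) (h22 : ¬ (aD % 4 = 2 ∧ bD % 4 = 2)) (H : ℕ) :
    GoodPeriod aN bN aD bD H ↔ (aD ∣ H ∧ bD ∣ H) := by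
  have hca : IsCoprime ((aD:ℤ)) aN := (Int.isCoprime_iff_gcd_eq_one.mpr ha).symm
  have hcb : IsCoprime ((bD:ℤ)) bN := (Int.isCoprime_iff_gcd_eq_one.mpr hb).symm
  have hAne : ((aD:ℤ)) ≠ 0 := by exact_mod_cast (by omega : aD ≠ 0)
  rw [good_iff_dvd aN bN aD bD haD hbD H, zcond_iff hca]
  constructor
  · rintro ⟨h1, h2⟩
    have hAH : (aD:ℤ) ∣ (H:ℤ) := by
      by_cases hae : aD % 2 = 0
      · -- aD ≡ 2 (mod 4)
        have h2a : aD % 4 = 2 := by omega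
        have hAZ : ((aD:ℤ)) = 2*((aD/2 : ℕ) : ℤ) := by
          exact_mod_cast (by omega : aD = 2*(aD/2))
        have hMo : ¬ (2:ℤ) ∣ ((aD/2 : ℕ) : ℤ) := by
          intro h; have : 2 ∣ aD/2 := by exact_mod_cast h
          omega
        have hMH : ((aD/2 : ℕ):ℤ) ∣ (H:ℤ) := by
          rw [hAZ] at h1
          exact (mul_dvd_mul_iff_left (two_ne_zero (α := ℤ))).mp h1
        have h2H : (2:ℤ) ∣ (H:ℤ) := by
          by_cases hbe : bD % 2 = 0
          · have h4B : (4:ℤ) ∣ ((bD:ℤ)) := by exact_mod_cast (by omega : 4 ∣ bD)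
            exact two_dvd_H_of_b_four hMo (not_two_dvd_num hb (by omega)) h4B
              (by rwa [hAZ] at h2)
          · have hBo : ¬ (2:ℤ) ∣ ((bD:ℤ)) := by
              intro h; have : 2 ∣ bD := by exact_mod_cast h
              omega
            exact two_dvd_H_of_b_odd (not_two_dvd_num ha (by omega)) hBo
              (by rwa [hAZ] at h2)
        rw [hAZ]
        exact (((Int.prime_two.coprime_iff_not_dvd).mpr hMo)).mul_dvd h2H hMH
      · -- aD odd
        have hAo : ¬ (2:ℤ) ∣ ((aD:ℤ)) := by
          intro h; have : 2 ∣ aD := by exact_mod_cast h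
          omega
        exact key_odd hAo h1
    have hBH := tailB hAne hcb hAH h2
    exact ⟨by exact_mod_cast hAH, by exact_mod_cast hBH⟩
  · rintro ⟨h1, h2⟩
    exact goodZ_of_dvd (by exact_mod_cast h1) (by exact_mod_cast h2)

lemma lcm_half (a b : ℕ) (ha : 0 < a) (hb : 0 < b) (h2 : 2 ∣ a) :
    Nat.lcm (a/2) b = Nat.lcm a b ∨ Nat.lcm (a/2) b = Nat.lcm a b / 2 := by
  obtain ⟨m, rfl⟩ := h2
  have hm : 0 < m := by omega
  rw [Nat.mul_div_cancel_left m (by norm_num)]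
  have hL : Nat.lcm m b ∣ Nat.lcm (2*m) b :=
    Nat.lcm_dvd ((dvd_mul_left m 2).trans (Nat.dvd_lcm_left _ _)) (Nat.dvd_lcm_right _ _)
  have h2L : Nat.lcm (2*m) b ∣ 2 * Nat.lcm m b :=
    Nat.lcm_dvd (mul_dvd_mul_left 2 (Nat.dvd_lcm_left m b))
      ((Nat.dvd_lcm_right m b).trans (dvd_mul_left _ 2))
  obtain ⟨k, hk⟩ := hL
  have hLpos : 0 < Nat.lcm m b := Nat.lcm_pos hm hb
  have hk2 : k ∣ 2 := by
    have h3 : Nat.lcm m b * k ∣ Nat.lcm m b * 2 := by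
      rw [← hk, mul_comm (Nat.lcm m b) 2]; exact h2L
    exact (Nat.mul_dvd_mul_iff_left hLpos).mp h3
  rcases (Nat.dvd_prime Nat.prime_two).mp hk2 with h | h
  · left; rw [hk, h, mul_one]
  · right; rw [hk, h]; omega

/-- The horizontal period of the parabola y = (aN/aD)·x² + (bN/bD)·x + c:
the smallest positive integer H making z and w integral. -/
theorem horizontal_period_parabola (aN bN : ℤ) (aD bD : ℕ)
    (haD : 1 ≤ aD) (hbD : 1 ≤ bD)
    (ha : Int.gcd aN (aD : ℤ) = 1) (hb : Int.gcd bN (bD : ℤ) = 1)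
    (H : ℕ) (hH : 0 < H) (hgood : GoodPeriod aN bN aD bD H)
    (hmin : ∀ H' : ℕ, 0 < H' → GoodPeriod aN bN aD bD H' → H ≤ H') :
    (aD % 4 = 0 → H = Nat.lcm (aD / 2) bD) ∧
    (aD % 4 = 2 ∧ bD % 4 = 2 → H = Nat.lcm (aD / 2) (bD / 2)) ∧
    (¬(aD % 4 = 0) → ¬(aD % 4 = 2 ∧ bD % 4 = 2) → H = Nat.lcm aD bD) ∧
    (H = Nat.lcm aD bD ∨ H = Nat.lcm aD bD / 2) := by
  by_cases h0 : aD % 4 = 0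
  · have hiff := good_iff_case1 aN bN aD bD haD hbD ha hb h0
    set M := Nat.lcm (aD/2) bD with hMdef
    have hMpos : 0 < M := Nat.lcm_pos (by omega) (by omega)
    have hHM : H = M := by
      have hle : H ≤ M := hmin M hMpos ((hiff M).mpr ⟨Nat.dvd_lcm_left _ _, Nat.dvd_lcm_right _ _⟩)
      obtain ⟨hx, hy⟩ := (hiff H).mp hgood
      exact le_antisymm hle (Nat.le_of_dvd hH (Nat.lcm_dvd hx hy))
    refine ⟨fun _ => hHM, fun hc => by omega, fun hc _ => (hc h0).elim, ?_⟩
    rcases lcm_half aD bD (by omega) (by omega) (by omega) with h | h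
    · left; rw [hHM, hMdef, h]
    · right; rw [hHM, hMdef, h]
  · by_cases h22 : aD % 4 = 2 ∧ bD % 4 = 2
    · have hiff := good_iff_case2 aN bN aD bD haD hbD ha hb h22.1 h22.2
      set M := Nat.lcm (aD/2) (bD/2) with hMdef
      have hMpos : 0 < M := Nat.lcm_pos (by omega) (by omega)
      have hHM : H = M := by
        have hle : H ≤ M := hmin M hMpos ((hiff M).mpr ⟨Nat.dvd_lcm_left _ _, Nat.dvd_lcm_right _ _⟩)
        obtain ⟨hx, hy⟩ := (hiff H).mp hgood
        exact le_antisymm hle (Nat.le_of_dvd hH (Nat.lcm_dvd hx hy))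
      have hlcm : Nat.lcm aD bD = 2 * M := by
        conv_lhs => rw [show aD = 2*(aD/2) by omega, show bD = 2*(bD/2) by omega]
        rw [Nat.lcm_mul_left]
      refine ⟨fun hc => absurd hc h0, fun _ => hHM, fun _ hn => absurd h22 hn, Or.inr (by omega)⟩
    · have hiff := good_iff_case3 aN bN aD bD haD hbD ha hb h0 h22
      set M := Nat.lcm aD bD with hMdef
      have hMpos : 0 < M := Nat.lcm_pos (by omega) (by omega)
      have hHM : H = M := by
        have hle : H ≤ M := hmin M hMpos ((hiff M).mpr ⟨Nat.dvd_lcm_left _ _, Nat.dvd_lcm_right _ _⟩)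
        obtain ⟨hx, hy⟩ := (hiff H).mp hgood
        exact le_antisymm hle (Nat.le_of_dvd hH (Nat.lcm_dvd hx hy))
      exact ⟨fun hc => absurd hc h0, fun hc => absurd hc h22, fun _ _ => hHM, Or.inl hHM⟩
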